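/- Let 𝒳, 𝒜, 𝒴, 𝒴' be finite sets and (X_1,A_1,Y_1),…,(X_n,A_n,Y_n) i.i.d. from a joint probability mass function on 𝒳 × 𝒜 × 𝒴 whose (A,Y)-marginal is strictly positive; let q(y|a) = P(Y_1=y|A_1=a), f : 𝒳 → 𝒴' a fixed function, and Ŷ_i = f(X_i). For k = 1,…,K, let Π_k be random permutations that are conditionally i.i.d. given (A, Y) (and independent of X given (A,Y)) with conditional distribution the ICP distribution with density q, and set Ã^{(k)} = A_{Π_k}. Let T : (𝒴')ⁿ × 𝒜ⁿ × 𝒴ⁿ → ℝ be any function, and define p_v = (1 + Σ_{k=1}^K 1[T(Ŷ, A, Y) ≥ T(Ŷ, Ã^{(k)}, Y)]) / (K+1). If f(X_1) is conditionally independent of A_1 given Y_1 (the equalized odds null hypothesis), then for every α ∈ [0,1], P(p_v ≤ α) ≤ α. -/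

import Mathlib

/-- Probability of an event under a probability mass function `p` on a finite sample space. -/
noncomputable def Pr {Ω : Type*} [Fintype Ω] (p : Ω → ℝ) (E : Set Ω) : ℝ :=
  ∑ ω, E.indicator p ω

/-- The ICP (inverse conditional permutation) probability of a permutation `π`, for the
conditional density `q` of `Y` given `A`. -/
noncomputable def ICPweight {𝒜 𝒴 : Type*} {n : ℕ} (q : 𝒴 → 𝒜 → ℝ)
    (a : Fin n → 𝒜) (y : Fin n → 𝒴) (π : Equiv.Perm (Fin n)) : ℝ :=
  (∏ i, q (y (π⁻¹ i)) (a i)) / ∑ π' : Equiv.Perm (Fin n), ∏ i, q (y (π'⁻¹ i)) (a i)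

open Finset

lemma aux_sum_fiber {Ω V : Type*} [Fintype Ω] [Fintype V] (p : Ω → ℝ)
    (val : Ω → V) (F : V → ℝ) :
    ∑ ω, F (val ω) * p ω = ∑ v, F v * Pr p {ω | val ω = v} := by
  classical
  unfold Pr
  simp only [Set.indicator_apply, Set.mem_setOf_eq, mul_sum, mul_ite, mul_zero]
  rw [Finset.sum_comm]
  refine Finset.sum_congr rfl fun ω _ => ?_
  simp [Finset.sum_ite_eq]

lemma aux_card_rank {N : ℕ} (v : Fin N → ℝ) (c : ℝ) (hc : 0 ≤ c) :
    ((Finset.univ.filter fun jj : Fin N =>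
        (1 : ℝ) + ((Finset.univ.filter fun l => l ≠ jj ∧ v l ≤ v jj).card : ℝ) ≤ c).card : ℝ) ≤ c := by
  classical
  set S := Finset.univ.filter fun jj : Fin N =>
        (1 : ℝ) + ((Finset.univ.filter fun l => l ≠ jj ∧ v l ≤ v jj).card : ℝ) ≤ c with hS
  rcases S.eq_empty_or_nonempty with h | h
  · simp [h, hc]
  · obtain ⟨jj, hjS, hjmax⟩ := Finset.exists_max_image S v h
    have hsub : S.erase jj ⊆ Finset.univ.filter fun l => l ≠ jj ∧ v l ≤ v jj := by
      intro l hl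
      simp only [Finset.mem_erase] at hl
      simp only [Finset.mem_filter, Finset.mem_univ, true_and]
      exact ⟨hl.1, hjmax l hl.2⟩
    have hcard : S.card ≤ 1 + (Finset.univ.filter fun l => l ≠ jj ∧ v l ≤ v jj).card := by
      have h1 := Finset.card_le_card hsub
      have h2 : (S.erase jj).card = S.card - 1 := Finset.card_erase_of_mem hjS
      have h3 : 1 ≤ S.card := Finset.card_pos.mpr h
      omega
    have hj' : (1 : ℝ) + ((Finset.univ.filter fun l => l ≠ jj ∧ v l ≤ v jj).card : ℝ) ≤ c :=
      (Finset.mem_filter.mp hjS).2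
    have : (S.card : ℝ) ≤ 1 + ((Finset.univ.filter fun l => l ≠ jj ∧ v l ≤ v jj).card : ℝ) := by
      exact_mod_cast hcard
    linarith

lemma aux_card_succ {K : ℕ} (Q : Fin (K+1) → Prop) [DecidablePred Q] :
    (Finset.univ.filter fun l : Fin (K+1) => l ≠ 0 ∧ Q l).card
      = (Finset.univ.filter fun k : Fin K => Q k.succ).card := by
  symm
  apply Finset.card_bij (fun k _ => Fin.succ k)
  · intro k hk
    simp only [Finset.mem_filter, Finset.mem_univ, true_and] at hk ⊢
    exact ⟨Fin.succ_ne_zero k, hk⟩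
  · intro k1 _ k2 _ h
    exact Fin.succ_injective _ h
  · intro l hl
    simp only [Finset.mem_filter, Finset.mem_univ, true_and] at hl
    obtain ⟨k, rfl⟩ := Fin.eq_succ_of_ne_zero hl.1
    exact ⟨k, by simp [hl.2], rfl⟩

lemma aux_rank_relabel {N : ℕ} (v : Fin N → ℝ) (σ : Equiv.Perm (Fin N)) (jj : Fin N) :
    (Finset.univ.filter fun l => l ≠ jj ∧ v (σ l) ≤ v (σ jj)).card
      = (Finset.univ.filter fun l => l ≠ σ jj ∧ v l ≤ v (σ jj)).card := by
  classical
  apply Finset.card_bij (fun l _ => σ l)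
  · intro l hl
    simp only [Finset.mem_filter, Finset.mem_univ, true_and] at hl ⊢
    exact ⟨fun h => hl.1 (σ.injective h), hl.2⟩
  · intro l1 _ l2 _ h
    exact σ.injective h
  · intro l hl
    simp only [Finset.mem_filter, Finset.mem_univ, true_and] at hl
    refine ⟨σ.symm l, ?_, by simp⟩
    simp only [Finset.mem_filter, Finset.mem_univ, true_and, Equiv.apply_symm_apply]
    exact ⟨fun h => hl.1 (by rw [← h]; simp), hl.2⟩

lemma aux_ICP_eq {𝒜 𝒴 : Type*} [Fintype 𝒜] [Fintype 𝒴] {n : ℕ}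
    (q : 𝒴 → 𝒜 → ℝ) (m : 𝒜 → 𝒴 → ℝ) (hm : ∀ b y0, 0 < m b y0)
    [Nonempty 𝒴]
    (hq : ∀ y0 b, q y0 b = m b y0 / ∑ y', m b y')
    (a : Fin n → 𝒜) (y : Fin n → 𝒴) (π : Equiv.Perm (Fin n)) :
    ICPweight q a y π
      = (∏ i, m (a (π i)) (y i)) / ∑ π' : Equiv.Perm (Fin n), ∏ i, m (a (π' i)) (y i) := by
  classical
  have hr : ∀ b, 0 < ∑ y', m b y' :=
    fun b => Finset.sum_pos (fun y' _ => hm b y') Finset.univ_nonempty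
  have key : ∀ σ : Equiv.Perm (Fin n), (∏ i, q (y (σ⁻¹ i)) (a i))
      = (∏ i, m (a (σ i)) (y i)) / ∏ i, (∑ y', m (a i) y') := by
    intro σ
    simp only [hq]
    rw [Finset.prod_div_distrib]
    congr 1
    have := Equiv.prod_comp σ (fun i => m (a i) (y (σ⁻¹ i)))
    simp only [Equiv.Perm.coe_inv, Equiv.symm_apply_apply] at this
    exact this.symm
  have hR : (0:ℝ) < ∏ i, (∑ y', m (a i) y') :=
    Finset.prod_pos fun i _ => hr (a i)
  have hZ : (0:ℝ) < ∑ π' : Equiv.Perm (Fin n), ∏ i, m (a (π' i)) (y i) :=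
    Finset.sum_pos (fun π' _ => Finset.prod_pos fun i _ => hm _ _) Finset.univ_nonempty
  unfold ICPweight
  simp only [key]
  rw [← Finset.sum_div]
  rw [div_div_div_eq]
  rw [mul_comm ((∏ i : Fin n, m (a (π i)) (y i)))]
  exact mul_div_mul_left _ _ hR.ne'

lemma aux_ICP_sum {𝒜 𝒴 : Type*} [Fintype 𝒜] [Fintype 𝒴] {n : ℕ}
    (q : 𝒴 → 𝒜 → ℝ) (hq : ∀ y0 b, 0 < q y0 b)
    (a : Fin n → 𝒜) (y : Fin n → 𝒴) :
    ∑ π : Equiv.Perm (Fin n), ICPweight q a y π = 1 := by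
  have hD : (0:ℝ) < ∑ π' : Equiv.Perm (Fin n), ∏ i, q (y (π'⁻¹ i)) (a i) :=
    Finset.sum_pos (fun π' _ => Finset.prod_pos fun i _ => hq _ _) Finset.univ_nonempty
  unfold ICPweight
  rw [← Finset.sum_div]
  exact div_self hD.ne'

lemma aux_push {𝒳 𝒴' : Type*} [Fintype 𝒳] [Fintype 𝒴'] [DecidableEq 𝒴'] {n : ℕ} (f : 𝒳 → 𝒴')
    (F : (Fin n → 𝒴') → ℝ) (G : Fin n → 𝒳 → ℝ) :
    ∑ x : Fin n → 𝒳, F (fun i => f (x i)) * ∏ i, G i (x i)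
      = ∑ yh : Fin n → 𝒴', F yh * ∏ i, (∑ x0, if f x0 = yh i then G i x0 else 0) := by
  classical
  have h1 : ∀ yh : Fin n → 𝒴', (∏ i, ∑ x0, if f x0 = yh i then G i x0 else 0)
      = ∑ x : Fin n → 𝒳, ∏ i, (if f (x i) = yh i then G i (x i) else 0) :=
    fun yh => Fintype.prod_sum _
  simp_rw [h1, Finset.mul_sum]
  rw [Finset.sum_comm]
  refine Finset.sum_congr rfl fun x _ => ?_
  have h2 : ∀ yh : Fin n → 𝒴', (∏ i, if f (x i) = yh i then G i (x i) else 0)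
      = if (fun i => f (x i)) = yh then ∏ i, G i (x i) else 0 := by
    intro yh
    rw [Fintype.prod_ite_zero]
    congr 1
    simp [funext_iff]
  simp_rw [h2, mul_ite, mul_zero]
  simp [Finset.sum_ite_eq]

lemma aux_sum4 {A B C D : Type*} [Fintype A] [Fintype B] [Fintype C] [Fintype D]
    (g : A → B → C → D → ℝ) :
    ∑ a : A, ∑ b : B, ∑ c : C, ∑ d : D, g a b c d
      = ∑ d : D, ∑ c : C, ∑ a : A, ∑ b : B, g a b c d := by
  have h1 : ∀ a : A, ∑ b : B, ∑ c : C, ∑ d : D, g a b c d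
      = ∑ d : D, ∑ c : C, ∑ b : B, g a b c d := by
    intro a
    have : ∀ b : B, ∑ c : C, ∑ d : D, g a b c d = ∑ d : D, ∑ c : C, g a b c d :=
      fun b => Finset.sum_comm
    simp_rw [this]
    rw [Finset.sum_comm]
    exact Finset.sum_congr rfl fun d _ => Finset.sum_comm
  simp_rw [h1]
  rw [Finset.sum_comm]
  exact Finset.sum_congr rfl fun d _ => Finset.sum_comm

open Classical Finset in
lemma aux_core {𝒜 𝒴 𝒴' : Type*} [Fintype 𝒜] [Fintype 𝒴] [Nonempty 𝒴] {n K : ℕ}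
    (q : 𝒴 → 𝒜 → ℝ) (m : 𝒜 → 𝒴 → ℝ) (hm : ∀ b y0, 0 < m b y0)
    (hq : ∀ y0 b, q y0 b = m b y0 / ∑ y', m b y')
    (T : (Fin n → 𝒴') → (Fin n → 𝒜) → (Fin n → 𝒴) → ℝ)
    (α : ℝ) (hα0 : 0 ≤ α)
    (yh : Fin n → 𝒴') (y : Fin n → 𝒴) :
    ∑ a : Fin n → 𝒜, ∑ πs : Fin K → Equiv.Perm (Fin n),
        (if ((1 : ℝ) + ((Finset.univ.filter (fun k : Fin K =>
            T yh (fun i => a (πs k i)) y ≤ T yh a y)).card : ℝ)) / (K + 1) ≤ α then 1 else 0)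
          * ((∏ k, ICPweight q a y (πs k)) * ∏ i, m (a i) (y i))
      ≤ α * ∏ i, ∑ b, m b (y i) := by
  classical
  have hqpos : ∀ y0 b, 0 < q y0 b := by
    intro y0 b
    rw [hq]
    exact div_pos (hm b y0) (Finset.sum_pos (fun y' _ => hm b y') Finset.univ_nonempty)
  set tv : (Fin n → 𝒜) → (Fin K → Equiv.Perm (Fin n)) → Fin (K+1) → ℝ :=
    fun a πs => Fin.cons (T yh a y) (fun k => T yh (fun i => a (πs k i)) y) with htv
  set Mf : (Fin n → 𝒜) → ℝ := fun a => ∏ i, m (a i) (y i) with hMf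
  set w : (Fin n → 𝒜) → (Fin K → Equiv.Perm (Fin n)) → ℝ :=
    fun a πs => (∏ k, ICPweight q a y (πs k)) * Mf a with hw
  set Rnk : Fin (K+1) → (Fin n → 𝒜) → (Fin K → Equiv.Perm (Fin n)) → ℕ :=
    fun j a πs => (Finset.univ.filter fun l => l ≠ j ∧ tv a πs l ≤ tv a πs j).card with hRnk
  set Zf : (Fin n → 𝒜) → ℝ := fun a => ∑ π : Equiv.Perm (Fin n), Mf (fun i => a (π i)) with hZf
  have hMfpos : ∀ a, 0 < Mf a := fun a => Finset.prod_pos fun i _ => hm _ _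
  have hZpos : ∀ a, 0 < Zf a :=
    fun a => Finset.sum_pos (fun π _ => hMfpos _) Finset.univ_nonempty
  have hICP : ∀ (a : Fin n → 𝒜) (π : Equiv.Perm (Fin n)),
      ICPweight q a y π = Mf (fun i => a (π i)) / Zf a := by
    intro a π
    rw [aux_ICP_eq q m hm hq a y π]
  have hZcomp : ∀ (a : Fin n → 𝒜) (σ : Equiv.Perm (Fin n)),
      Zf (fun i => a (σ i)) = Zf a := by
    intro a σ
    simp only [hZf]
    exact Fintype.sum_equiv (Equiv.mulLeft σ) _ _ (fun π => by
      simp [Equiv.Perm.mul_apply])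
  have hwpos : ∀ a πs, 0 ≤ w a πs := by
    intro a πs
    refine mul_nonneg (Finset.prod_nonneg fun k _ => ?_) (hMfpos a).le
    rw [hICP]
    exact div_nonneg (hMfpos _).le (hZpos _).le
  -- the K+1 sums
  set Sj : Fin (K+1) → ℝ := fun j => ∑ a, ∑ πs,
      (if ((1 : ℝ) + (Rnk j a πs : ℝ)) / (K + 1) ≤ α then 1 else 0) * w a πs with hSj
  -- the exchange step
  have hEq : ∀ j, Sj j = Sj 0 := by
    intro j
    induction j using Fin.cases with
    | zero => rfl
    | succ k0 =>
      -- involution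
      set Φ : ((Fin n → 𝒜) × (Fin K → Equiv.Perm (Fin n)))
          → ((Fin n → 𝒜) × (Fin K → Equiv.Perm (Fin n))) :=
        fun p => ((fun i => p.1 (p.2 k0 i)),
          fun l => if l = k0 then (p.2 k0)⁻¹ else (p.2 k0)⁻¹ * p.2 l) with hΦdef
      have hΦ : Function.Involutive Φ := by
        intro p
        obtain ⟨a, πs⟩ := p
        simp only [hΦdef]
        refine Prod.ext ?_ ?_
        · funext i
          simp [Equiv.apply_symm_apply]
        · funext l
          by_cases hl : l = k0
          · simp [hl]
          · simp only [hl, if_false, if_pos rfl]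
            simp [← mul_assoc]
      -- tv transforms by the swap
      have htvswap : ∀ (a : Fin n → 𝒜) (πs : Fin K → Equiv.Perm (Fin n)) (l : Fin (K+1)),
          tv (Φ (a, πs)).1 (Φ (a, πs)).2 l = tv a πs (Equiv.swap 0 k0.succ l) := by
        intro a πs l
        induction l using Fin.cases with
        | zero =>
          simp [htv, hΦdef, Equiv.swap_apply_left, Fin.cons_zero, Fin.cons_succ]
        | succ l' =>
          by_cases hl : l' = k0
          · subst hl
            simp [htv, hΦdef, Equiv.swap_apply_right, Fin.cons_zero, Fin.cons_succ,
              Equiv.apply_symm_apply]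
          · have hne1 : (l'.succ : Fin (K+1)) ≠ 0 := Fin.succ_ne_zero l'
            have hne2 : (l'.succ : Fin (K+1)) ≠ k0.succ :=
              fun h => hl (Fin.succ_injective _ h)
            simp [htv, hΦdef, Equiv.swap_apply_of_ne_of_ne hne1 hne2,
              Fin.cons_succ, hl, Equiv.Perm.mul_apply, Equiv.apply_symm_apply]
      -- w is invariant
      have hwswap : ∀ (a : Fin n → 𝒜) (πs : Fin K → Equiv.Perm (Fin n)),
          w (Φ (a, πs)).1 (Φ (a, πs)).2 = w a πs := by
        intro a πs
        have hfun : ∀ k : Fin K, Mf (fun i => (Φ (a, πs)).1 ((Φ (a, πs)).2 k i))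
            = if k = k0 then Mf a else Mf (fun i => a (πs k i)) := by
          intro k
          by_cases hk : k = k0
          · subst hk
            simp [hΦdef, Equiv.apply_symm_apply]
          · simp [hΦdef, hk, Equiv.Perm.mul_apply, Equiv.apply_symm_apply]
        have hZ' : Zf (Φ (a, πs)).1 = Zf a := hZcomp a (πs k0)
        have hMf' : Mf (Φ (a, πs)).1 = Mf (fun i => a (πs k0 i)) := rfl
        have heq : ∏ k ∈ Finset.univ.erase k0,
            ((if k = k0 then Mf a else Mf (fun i => a (πs k i))) / Zf a)
            = ∏ k ∈ Finset.univ.erase k0, (Mf (fun i => a (πs k i)) / Zf a) :=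
          Finset.prod_congr rfl fun k hk => by rw [if_neg (Finset.mem_erase.mp hk).1]
        have hmain : (∏ k, ((if k = k0 then Mf a else Mf (fun i => a (πs k i))) / Zf a))
            * Mf (fun i => a (πs k0 i))
            = (∏ k, (Mf (fun i => a (πs k i)) / Zf a)) * Mf a := by
          rw [← Finset.mul_prod_erase Finset.univ
              (fun k => (if k = k0 then Mf a else Mf (fun i => a (πs k i))) / Zf a)
              (Finset.mem_univ k0),
            ← Finset.mul_prod_erase Finset.univ
              (fun k => Mf (fun i => a (πs k i)) / Zf a) (Finset.mem_univ k0),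
            heq, if_pos rfl]
          ring
        simp only [hw, hICP, hZ', hMf', hfun]
        exact hmain
      -- Rnk transforms
      have hRnkswap : ∀ (a : Fin n → 𝒜) (πs : Fin K → Equiv.Perm (Fin n)),
          Rnk 0 (Φ (a, πs)).1 (Φ (a, πs)).2 = Rnk k0.succ a πs := by
        intro a πs
        simp only [hRnk]
        have h1 : (Finset.univ.filter fun l => l ≠ 0 ∧
            tv (Φ (a, πs)).1 (Φ (a, πs)).2 l ≤ tv (Φ (a, πs)).1 (Φ (a, πs)).2 0).card
            = (Finset.univ.filter fun l => l ≠ 0 ∧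
              tv a πs (Equiv.swap 0 k0.succ l) ≤ tv a πs (Equiv.swap 0 k0.succ 0)).card := by
          congr 1
          apply Finset.filter_congr
          intro l _
          rw [htvswap, htvswap]
        rw [h1, aux_rank_relabel (tv a πs) (Equiv.swap 0 k0.succ) 0, Equiv.swap_apply_left]
      -- now the sum identity via the involution
      have hSp : ∀ jj, Sj jj = ∑ p : (Fin n → 𝒜) × (Fin K → Equiv.Perm (Fin n)),
          (if ((1:ℝ) + (Rnk jj p.1 p.2 : ℝ)) / (K + 1) ≤ α then 1 else 0) * w p.1 p.2 := by
        intro jj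
        simp only [hSj]
        rw [Fintype.sum_prod_type]
      rw [hSp k0.succ, hSp 0]
      rw [← Equiv.sum_comp (⟨Φ, Φ, hΦ.leftInverse, hΦ.rightInverse⟩ :
        Equiv.Perm ((Fin n → 𝒜) × (Fin K → Equiv.Perm (Fin n))))
        (fun p => (if ((1:ℝ) + (Rnk 0 p.1 p.2 : ℝ)) / (K + 1) ≤ α then 1 else 0) * w p.1 p.2)]
      refine Finset.sum_congr rfl fun p _ => ?_
      obtain ⟨a, πs⟩ := p
      show (if ((1:ℝ) + (Rnk k0.succ a πs : ℝ)) / (K + 1) ≤ α then 1 else 0) * w a πs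
        = (if ((1:ℝ) + (Rnk 0 (Φ (a, πs)).1 (Φ (a, πs)).2 : ℝ)) / (K + 1) ≤ α then 1 else 0)
            * w (Φ (a, πs)).1 (Φ (a, πs)).2
      rw [hRnkswap a πs, hwswap a πs]
  -- finish
  have hKpos : (0:ℝ) < (K:ℝ) + 1 := by positivity
  have hL : (∑ a : Fin n → 𝒜, ∑ πs : Fin K → Equiv.Perm (Fin n),
        (if ((1 : ℝ) + ((Finset.univ.filter (fun k : Fin K =>
            T yh (fun i => a (πs k i)) y ≤ T yh a y)).card : ℝ)) / (K + 1) ≤ α then 1 else 0)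
          * ((∏ k, ICPweight q a y (πs k)) * ∏ i, m (a i) (y i))) = Sj 0 := by
    simp only [hSj]
    refine Finset.sum_congr rfl fun a _ => Finset.sum_congr rfl fun πs _ => ?_
    have hcard : ((Finset.univ.filter (fun k : Fin K =>
        T yh (fun i => a (πs k i)) y ≤ T yh a y)).card) = Rnk 0 a πs := by
      simp only [hRnk]
      rw [aux_card_succ (fun l => tv a πs l ≤ tv a πs 0)]
      simp [htv, Fin.cons_succ, Fin.cons_zero]
    simp only [hcard, hw, hMf]
  have hsumj : ∑ jj : Fin (K+1), Sj jj = ((K:ℝ)+1) * Sj 0 := by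
    calc ∑ jj, Sj jj = ∑ _jj : Fin (K+1), Sj 0 := Finset.sum_congr rfl fun jj _ => hEq jj
    _ = ((K:ℝ)+1) * Sj 0 := by
        rw [Finset.sum_const, Finset.card_univ, Fintype.card_fin, nsmul_eq_mul]
        push_cast
        ring
  have hswap2 : ∑ jj : Fin (K+1), Sj jj = ∑ a, ∑ πs, ((Finset.univ.filter fun jj =>
      ((1:ℝ) + (Rnk jj a πs : ℝ)) / (K+1) ≤ α).card : ℝ) * w a πs := by
    simp only [hSj]
    rw [Finset.sum_comm]
    refine Finset.sum_congr rfl fun a _ => ?_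
    rw [Finset.sum_comm]
    refine Finset.sum_congr rfl fun πs _ => ?_
    rw [← Finset.sum_mul]
    congr 1
    rw [Finset.sum_boole]
  have hbd : ∀ (a : Fin n → 𝒜) (πs : Fin K → Equiv.Perm (Fin n)),
      ((Finset.univ.filter fun jj =>
        ((1:ℝ) + (Rnk jj a πs : ℝ)) / (K+1) ≤ α).card : ℝ) ≤ α * ((K:ℝ)+1) := by
    intro a πs
    have h1 : (Finset.univ.filter fun jj => ((1:ℝ) + (Rnk jj a πs : ℝ)) / (K+1) ≤ α)
        = (Finset.univ.filter fun jj => (1:ℝ) + ((Finset.univ.filter fun l =>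
            l ≠ jj ∧ tv a πs l ≤ tv a πs jj).card : ℝ) ≤ α * ((K:ℝ)+1)) := by
      apply Finset.filter_congr
      intro jj _
      simp only [hRnk, div_le_iff₀ hKpos]
    rw [h1]
    exact aux_card_rank (tv a πs) (α * ((K:ℝ)+1)) (by positivity)
  have hwsum : ∑ a : Fin n → 𝒜, ∑ πs : Fin K → Equiv.Perm (Fin n), w a πs
      = ∏ i, ∑ b, m b (y i) := by
    have h1 : ∀ a : Fin n → 𝒜,
        ∑ πs : Fin K → Equiv.Perm (Fin n), (∏ k, ICPweight q a y (πs k)) = 1 := by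
      intro a
      rw [← Fintype.prod_sum (fun (_k : Fin K) (π : Equiv.Perm (Fin n)) => ICPweight q a y π)]
      simp [aux_ICP_sum q hqpos a y]
    have h2 : ∀ a, ∑ πs : Fin K → Equiv.Perm (Fin n),
        (∏ k, ICPweight q a y (πs k)) * Mf a = Mf a := by
      intro a; rw [← Finset.sum_mul, h1, one_mul]
    simp only [hw]
    simp_rw [h2]
    simp only [hMf]
    exact (Fintype.prod_sum (fun (i : Fin n) (b : 𝒜) => m b (y i))).symm
  have hfin : ((K:ℝ)+1) * Sj 0 ≤ ((K:ℝ)+1) * (α * ∏ i, ∑ b, m b (y i)) := by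
    rw [← hsumj, hswap2]
    calc ∑ a, ∑ πs, ((Finset.univ.filter fun jj =>
          ((1:ℝ) + (Rnk jj a πs : ℝ)) / (K+1) ≤ α).card : ℝ) * w a πs
        ≤ ∑ a, ∑ πs, (α * ((K:ℝ)+1)) * w a πs := by
          refine Finset.sum_le_sum fun a _ => Finset.sum_le_sum fun πs _ => ?_
          exact mul_le_mul_of_nonneg_right (hbd a πs) (hwpos a πs)
    _ = (α * ((K:ℝ)+1)) * ∑ a, ∑ πs, w a πs := by
          simp_rw [← Finset.mul_sum]
    _ = ((K:ℝ)+1) * (α * ∏ i, ∑ b, m b (y i)) := by rw [hwsum]; ring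
  rw [hL]
  exact le_of_mul_le_mul_left hfin hKpos

lemma aux_sum3 {A B C : Type*} [Fintype A] [Fintype B] [Fintype C]
    (g : A → B → C → ℝ) :
    ∑ a : A, ∑ b : B, ∑ c : C, g a b c = ∑ c : C, ∑ a : A, ∑ b : B, g a b c := by
  have h : ∀ a : A, ∑ b : B, ∑ c : C, g a b c = ∑ c : C, ∑ b : B, g a b c :=
    fun a => Finset.sum_comm
  simp_rw [h]
  exact Finset.sum_comm


open Classical in
/-- Proposition 2.3: the ICP-based hypothesis test for equalized odds
controls the type-I error: under the equalized-odds null `f(X₁) ⟂ A₁ ∣ Y₁`, the p-value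
`p_v = (1 + ∑ₖ 1[T(Ŷ,A,Y) ≥ T(Ŷ,Ã⁽ᵏ⁾,Y)])/(K+1)` computed from `K` conditionally i.i.d.
ICP copies `Ã⁽ᵏ⁾ = A_{Π_k}` satisfies `P(p_v ≤ α) ≤ α` for all `α ∈ [0,1]`. -/
theorem stmt_16 {Ω 𝒳 𝒜 𝒴 𝒴' : Type*} [Fintype Ω] [Fintype 𝒳] [Fintype 𝒜] [Fintype 𝒴']
    [Fintype 𝒴]
    (p : Ω → ℝ) (hp0 : ∀ ω, 0 ≤ p ω) (hp1 : ∑ ω, p ω = 1)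
    (j : 𝒳 → 𝒜 → 𝒴 → ℝ) (hj0 : ∀ x b y0, 0 ≤ j x b y0)
    (hj1 : ∑ x, ∑ b, ∑ y0, j x b y0 = 1)
    (hmarg : ∀ b y0, 0 < ∑ x, j x b y0)
    {n K : ℕ} (hn : 1 ≤ n)
    (X : Ω → Fin n → 𝒳) (A : Ω → Fin n → 𝒜) (Y : Ω → Fin n → 𝒴)
    (Prm : Ω → Fin K → Equiv.Perm (Fin n)) (f : 𝒳 → 𝒴')
    (q : 𝒴 → 𝒜 → ℝ) (hq : ∀ y0 b, q y0 b = (∑ x, j x b y0) / ∑ x, ∑ y', j x b y')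
    (hiid : ∀ (x : Fin n → 𝒳) (a : Fin n → 𝒜) (y : Fin n → 𝒴),
      Pr p {ω | X ω = x ∧ A ω = a ∧ Y ω = y} = ∏ i, j (x i) (a i) (y i))
    (hPrm : ∀ (x : Fin n → 𝒳) (a : Fin n → 𝒜) (y : Fin n → 𝒴)
        (πs : Fin K → Equiv.Perm (Fin n)),
      Pr p {ω | Prm ω = πs ∧ X ω = x ∧ A ω = a ∧ Y ω = y}
        = (∏ k, ICPweight q a y (πs k)) * Pr p {ω | X ω = x ∧ A ω = a ∧ Y ω = y})
    (hEO : ∀ (b : 𝒴') (a0 : 𝒜) (y0 : 𝒴),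
      (∑ x, if f x = b then j x a0 y0 else 0) * (∑ x, ∑ a', j x a' y0)
        = (∑ x, ∑ a', if f x = b then j x a' y0 else 0) * (∑ x, j x a0 y0))
    (T : (Fin n → 𝒴') → (Fin n → 𝒜) → (Fin n → 𝒴) → ℝ)
    (α : ℝ) (hα0 : 0 ≤ α) (hα1 : α ≤ 1) :
    Pr p {ω | ((1 : ℝ) + (Finset.univ.filter (fun k : Fin K =>
          T (fun i => f (X ω i)) (fun i => A ω (Prm ω k i)) (Y ω)
            ≤ T (fun i => f (X ω i)) (A ω) (Y ω))).card) / (K + 1) ≤ α}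
      ≤ α := by
    classical
  have h𝒳 : Nonempty 𝒳 := by
    by_contra h
    rw [not_nonempty_iff] at h
    haveI := h
    simp at hj1
  have h𝒜 : Nonempty 𝒜 := by
    by_contra h
    rw [not_nonempty_iff] at h
    haveI := h
    simp at hj1
  have h𝒴 : Nonempty 𝒴 := by
    by_contra h
    rw [not_nonempty_iff] at h
    haveI := h
    simp at hj1
  set m : 𝒜 → 𝒴 → ℝ := fun b y0 => ∑ x, j x b y0 with hm_def
  have hm : ∀ b y0, 0 < m b y0 := hmarg
  have hq' : ∀ y0 b, q y0 b = m b y0 / ∑ y', m b y' := by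
    intro y0 b
    rw [hq]
    congr 1
    exact Finset.sum_comm
  set s : 𝒴 → ℝ := fun y0 => ∑ b, m b y0 with hs_def
  have hs : ∀ y0, 0 < s y0 := fun y0 => Finset.sum_pos (fun b _ => hm b y0) Finset.univ_nonempty
  set u : 𝒴' → 𝒴 → ℝ := fun b' y0 => ∑ x, ∑ b, if f x = b' then j x b y0 else 0 with hu_def
  have hu0 : ∀ b' y0, 0 ≤ u b' y0 := fun b' y0 =>
    Finset.sum_nonneg fun x _ => Finset.sum_nonneg fun b _ => by
      split
      · exact hj0 x b y0
      · exact le_rfl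
  have husum : ∀ y0, ∑ b', u b' y0 = s y0 := by
    intro y0
    have h1 : ∀ x, ∑ b' : 𝒴', ∑ b : 𝒜, (if f x = b' then j x b y0 else 0)
        = ∑ b : 𝒜, j x b y0 := by
      intro x
      rw [Finset.sum_comm]
      refine Finset.sum_congr rfl fun b _ => ?_
      simp [Finset.sum_ite_eq]
    calc ∑ b', u b' y0
        = ∑ x, ∑ b', ∑ b, (if f x = b' then j x b y0 else 0) := Finset.sum_comm
    _ = ∑ x, ∑ b, j x b y0 := Finset.sum_congr rfl fun x _ => h1 x
    _ = s y0 := Finset.sum_comm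
  have hkey : ∀ b' a0 y0, (∑ x, if f x = b' then j x a0 y0 else 0)
      = u b' y0 * m a0 y0 / s y0 := by
    intro b' a0 y0
    have h := hEO b' a0 y0
    have hs0 : (∑ x, ∑ a', j x a' y0) = s y0 := Finset.sum_comm
    rw [hs0] at h
    rw [eq_div_iff (hs y0).ne']
    exact h
  set Cnd : (Fin K → Equiv.Perm (Fin n)) → (Fin n → 𝒴') → (Fin n → 𝒜) → (Fin n → 𝒴) → Prop :=
    fun πs yh a y => ((1 : ℝ) + ((Finset.univ.filter (fun k : Fin K =>
        T yh (fun i => a (πs k i)) y ≤ T yh a y)).card : ℝ)) / ((K : ℝ) + 1) ≤ α with hCnd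
  -- Step 1: express the probability as a sum over values
  have e1 : Pr p {ω | ((1 : ℝ) + (Finset.univ.filter (fun k : Fin K =>
          T (fun i => f (X ω i)) (fun i => A ω (Prm ω k i)) (Y ω)
            ≤ T (fun i => f (X ω i)) (A ω) (Y ω))).card) / (K + 1) ≤ α}
      = ∑ ω, (if Cnd (Prm ω) (fun i => f (X ω i)) (A ω) (Y ω) then 1 else 0) * p ω := by
    unfold Pr
    refine Finset.sum_congr rfl fun ω _ => ?_
    rw [Set.indicator_apply]
    by_cases h : Cnd (Prm ω) (fun i => f (X ω i)) (A ω) (Y ω)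
    · rw [if_pos h, if_pos, one_mul]
      simp only [hCnd] at h
      exact h
    · rw [if_neg h, if_neg, zero_mul]
      simp only [hCnd] at h
      exact h
  have e3 := e1.trans (aux_sum_fiber p (fun ω => (Prm ω, X ω, A ω, Y ω))
      (fun v => if Cnd v.1 (fun i => f (v.2.1 i)) v.2.2.1 v.2.2.2 then 1 else 0))
  have e4 : ∀ v : (Fin K → Equiv.Perm (Fin n)) × (Fin n → 𝒳) × (Fin n → 𝒜) × (Fin n → 𝒴),
      Pr p {ω | (Prm ω, X ω, A ω, Y ω) = v}
        = (∏ k, ICPweight q v.2.2.1 v.2.2.2 (v.1 k))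
            * ∏ i, j (v.2.1 i) (v.2.2.1 i) (v.2.2.2 i) := by
    intro v
    obtain ⟨πs, x, a, y⟩ := v
    have hst : {ω | (Prm ω, X ω, A ω, Y ω) = (πs, x, a, y)}
        = {ω | Prm ω = πs ∧ X ω = x ∧ A ω = a ∧ Y ω = y} := by
      ext ω
      simp [Prod.ext_iff]
    rw [hst, hPrm, hiid]
  rw [e3]
  simp only [e4]
  simp only [Fintype.sum_prod_type]
  rw [aux_sum4 (fun (πs : Fin K → Equiv.Perm (Fin n)) (x : Fin n → 𝒳) (a : Fin n → 𝒜)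
    (y : Fin n → 𝒴) => (if Cnd πs (fun i => f (x i)) a y then 1 else 0)
      * ((∏ k, ICPweight q a y (πs k)) * ∏ i, j (x i) (a i) (y i)))]
  -- Step 2: innermost x-sum via the null hypothesis
  have hx : ∀ (y : Fin n → 𝒴) (a : Fin n → 𝒜) (πs : Fin K → Equiv.Perm (Fin n)),
      (∑ x : Fin n → 𝒳, (if Cnd πs (fun i => f (x i)) a y then 1 else 0)
          * ((∏ k, ICPweight q a y (πs k)) * ∏ i, j (x i) (a i) (y i)))
        = ∑ yh : Fin n → 𝒴', (∏ i, (u (yh i) (y i) / s (y i)))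
            * ((if Cnd πs yh a y then 1 else 0)
              * ((∏ k, ICPweight q a y (πs k)) * ∏ i, m (a i) (y i))) := by
    intro y a πs
    have h0 := aux_push f (fun yh => (if Cnd πs yh a y then 1 else 0)
        * (∏ k, ICPweight q a y (πs k))) (fun i x0 => j x0 (a i) (y i))
    calc (∑ x : Fin n → 𝒳, (if Cnd πs (fun i => f (x i)) a y then 1 else 0)
          * ((∏ k, ICPweight q a y (πs k)) * ∏ i, j (x i) (a i) (y i)))
        = ∑ x : Fin n → 𝒳, ((if Cnd πs (fun i => f (x i)) a y then 1 else 0)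
            * (∏ k, ICPweight q a y (πs k))) * ∏ i, j (x i) (a i) (y i) := by
          refine Finset.sum_congr rfl fun x _ => by ring
    _ = ∑ yh : Fin n → 𝒴', ((if Cnd πs yh a y then 1 else 0)
          * (∏ k, ICPweight q a y (πs k)))
            * ∏ i, (∑ x0, if f x0 = yh i then j x0 (a i) (y i) else 0) := h0
    _ = ∑ yh : Fin n → 𝒴', (∏ i, (u (yh i) (y i) / s (y i)))
            * ((if Cnd πs yh a y then 1 else 0)
              * ((∏ k, ICPweight q a y (πs k)) * ∏ i, m (a i) (y i))) := by
          refine Finset.sum_congr rfl fun yh _ => ?_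
          have hpr : (∏ i, (∑ x0, if f x0 = yh i then j x0 (a i) (y i) else 0))
              = (∏ i, (u (yh i) (y i) / s (y i))) * ∏ i, m (a i) (y i) := by
            rw [← Finset.prod_mul_distrib]
            refine Finset.prod_congr rfl fun i _ => ?_
            rw [hkey (yh i) (a i) (y i)]
            ring
          rw [hpr]
          ring
  -- Step 3: per-y bound
  have hsum_u : ∀ y : Fin n → 𝒴,
      ∑ yh : Fin n → 𝒴', ∏ i, (u (yh i) (y i) / s (y i)) = 1 := by
    intro y
    rw [← Fintype.prod_sum (fun (i : Fin n) (b' : 𝒴') => u b' (y i) / s (y i))]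
    refine Finset.prod_eq_one fun i _ => ?_
    rw [← Finset.sum_div, husum, div_self (hs (y i)).ne']
  have hy : ∀ y : Fin n → 𝒴,
      (∑ a : Fin n → 𝒜, ∑ πs : Fin K → Equiv.Perm (Fin n), ∑ x : Fin n → 𝒳,
        (if Cnd πs (fun i => f (x i)) a y then 1 else 0)
          * ((∏ k, ICPweight q a y (πs k)) * ∏ i, j (x i) (a i) (y i)))
      ≤ α * ∏ i, s (y i) := by
    intro y
    have hcore := aux_core (𝒴' := 𝒴') (K := K) q m hm hq' T α hα0
    calc (∑ a : Fin n → 𝒜, ∑ πs : Fin K → Equiv.Perm (Fin n), ∑ x : Fin n → 𝒳,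
        (if Cnd πs (fun i => f (x i)) a y then 1 else 0)
          * ((∏ k, ICPweight q a y (πs k)) * ∏ i, j (x i) (a i) (y i)))
        = ∑ a, ∑ πs, ∑ yh : Fin n → 𝒴', (∏ i, (u (yh i) (y i) / s (y i)))
            * ((if Cnd πs yh a y then 1 else 0)
              * ((∏ k, ICPweight q a y (πs k)) * ∏ i, m (a i) (y i))) := by
          exact Finset.sum_congr rfl fun a _ => Finset.sum_congr rfl fun πs _ => hx y a πs
    _ = ∑ yh : Fin n → 𝒴', ∑ a, ∑ πs, (∏ i, (u (yh i) (y i) / s (y i)))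
            * ((if Cnd πs yh a y then 1 else 0)
              * ((∏ k, ICPweight q a y (πs k)) * ∏ i, m (a i) (y i))) :=
          aux_sum3 _
    _ = ∑ yh : Fin n → 𝒴', (∏ i, (u (yh i) (y i) / s (y i)))
            * (∑ a, ∑ πs, (if Cnd πs yh a y then 1 else 0)
              * ((∏ k, ICPweight q a y (πs k)) * ∏ i, m (a i) (y i))) := by
          refine Finset.sum_congr rfl fun yh _ => ?_
          rw [Finset.mul_sum]
          refine Finset.sum_congr rfl fun a _ => ?_
          rw [Finset.mul_sum]
    _ ≤ ∑ yh : Fin n → 𝒴', (∏ i, (u (yh i) (y i) / s (y i))) * (α * ∏ i, ∑ b, m b (y i)) := by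
          refine Finset.sum_le_sum fun yh _ => ?_
          refine mul_le_mul_of_nonneg_left ?_
            (Finset.prod_nonneg fun i _ => div_nonneg (hu0 _ _) (hs _).le)
          have := hcore yh y
          simp only [hCnd]
          exact this
    _ = α * ∏ i, s (y i) := by
          rw [← Finset.sum_mul, hsum_u y, one_mul]
  -- Step 4: conclude
  have hsum_s : ∑ y0 : 𝒴, s y0 = 1 := by
    calc ∑ y0 : 𝒴, s y0 = ∑ y0 : 𝒴, ∑ b, ∑ x, j x b y0 := rfl
    _ = ∑ x, ∑ y0 : 𝒴, ∑ b, j x b y0 := aux_sum3 _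
    _ = ∑ x, ∑ b, ∑ y0, j x b y0 := Finset.sum_congr rfl fun x _ => Finset.sum_comm
    _ = 1 := hj1
  calc (∑ y : Fin n → 𝒴, ∑ a : Fin n → 𝒜, ∑ πs : Fin K → Equiv.Perm (Fin n),
        ∑ x : Fin n → 𝒳, (if Cnd πs (fun i => f (x i)) a y then 1 else 0)
          * ((∏ k, ICPweight q a y (πs k)) * ∏ i, j (x i) (a i) (y i)))
      ≤ ∑ y : Fin n → 𝒴, α * ∏ i, s (y i) := Finset.sum_le_sum fun y _ => hy y
  _ = α * ∑ y : Fin n → 𝒴, ∏ i, s (y i) := by rw [Finset.mul_sum]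
  _ = α * ∏ _i : Fin n, ∑ y0, s y0 := by
        rw [Fintype.prod_sum (fun (_i : Fin n) (y0 : 𝒴) => s y0)]
  _ = α := by
        rw [hsum_s]
        simp
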